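/- Let (γ,ν): (I,t₀) → ℝ² × S¹ be a Legendre curve with γ(t)=(x(t),z(t)), ν(t)=(cos φ(t), sin φ(t)) and curvature (φ̇,β), and suppose x(t₀) > 0. Let J(t) = −β(t)x(t), H(t) = (x(t)φ̇(t) + β(t)cos φ(t))/2, and suppose α: I → ℝ is a smooth function with H(t) = α(t)J(t) for all t. Then the complex-valued function X(t) = x(t)sin φ(t) + i x(t)cos φ(t) satisfies the first order linear ODE Ẋ(t) − 2iα(t)β(t)X(t) = −β(t). Consequently, if η, F, G: I → ℝ satisfy η̇ = 2αβ, Ḟ = −β cos η, Ġ = −β sin η and X(t₀) = (F(t₀) − iG(t₀))(cos η(t₀) + i sin η(t₀)), then X(t) = (F(t) − iG(t))(cos η(t) + i sin η(t)) for all t; in particular x(t)cos φ(t) = F(t)sin η(t) − G(t)cos η(t), x(t)sin φ(t) = F(t)cos η(t) + G(t)sin η(t), and x(t)² = F(t)² + G(t)². -/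

import Mathlib

open Real

/-- Let `(γ, ν)` be a Legendre curve with `γ = (x, z)`,
`ν = (cos φ, sin φ)`, curvature `(φ̇, β)`, `x t₀ > 0`, and let `α` be smooth with
`H = αJ` (`H = (xφ̇ + β cos φ)/2`, `J = -βx`).  Then `X = x sin φ + i x cos φ` solves
`Ẋ - 2iαβX = -β`; consequently, if `η̇ = 2αβ`, `Ḟ = -β cos η`, `Ġ = -β sin η` and
`X(t₀) = (F(t₀) - iG(t₀))(cos η(t₀) + i sin η(t₀))`, then
`X = (F - iG)(cos η + i sin η)` everywhere; in particular
`x cos φ = F sin η - G cos η`, `x sin φ = F cos η + G sin η` and `x² = F² + G²`. -/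
theorem profile_curve_from_mean_curvature_ratio
    (x z φ β α : ℝ → ℝ) (t₀ : ℝ)
    (hx : ContDiff ℝ (⊤ : ℕ∞) x) (hz : ContDiff ℝ (⊤ : ℕ∞) z)
    (hφ : ContDiff ℝ (⊤ : ℕ∞) φ) (hβ : ContDiff ℝ (⊤ : ℕ∞) β)
    (hα : ContDiff ℝ (⊤ : ℕ∞) α)
    (hdx : ∀ t, deriv x t = -(β t) * sin (φ t))
    (hdz : ∀ t, deriv z t = β t * cos (φ t))
    (hx0 : x t₀ > 0)
    -- H = α J, where H = (xφ̇ + β cos φ)/2 and J = -βx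
    (hHJ : ∀ t, (x t * deriv φ t + β t * cos (φ t)) / 2 = α t * (-(β t) * x t))
    (X : ℝ → ℂ)
    (hX : ∀ t, X t = ((x t * sin (φ t) : ℝ) : ℂ) +
      Complex.I * ((x t * cos (φ t) : ℝ) : ℂ)) :
    (∀ t : ℝ, deriv X t - 2 * Complex.I * (α t : ℂ) * (β t : ℂ) * X t = -(β t : ℂ)) ∧
    (∀ η F G : ℝ → ℝ,
      ContDiff ℝ (⊤ : ℕ∞) η → ContDiff ℝ (⊤ : ℕ∞) F → ContDiff ℝ (⊤ : ℕ∞) G →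
      (∀ t, deriv η t = 2 * α t * β t) →
      (∀ t, deriv F t = -(β t) * cos (η t)) →
      (∀ t, deriv G t = -(β t) * sin (η t)) →
      X t₀ = ((F t₀ : ℂ) - Complex.I * (G t₀ : ℂ)) *
        ((cos (η t₀) : ℝ) + Complex.I * ((sin (η t₀) : ℝ) : ℂ)) →
      (∀ t : ℝ, X t = ((F t : ℂ) - Complex.I * (G t : ℂ)) *
        (((cos (η t) : ℝ) : ℂ) + Complex.I * ((sin (η t) : ℝ) : ℂ))) ∧
      (∀ t : ℝ, x t * cos (φ t) = F t * sin (η t) - G t * cos (η t)) ∧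
      (∀ t : ℝ, x t * sin (φ t) = F t * cos (η t) + G t * sin (η t)) ∧
      (∀ t : ℝ, x t ^ 2 = F t ^ 2 + G t ^ 2)) := by
  have hxd : Differentiable ℝ x := hx.differentiable (by simp)
  have hφd : Differentiable ℝ φ := hφ.differentiable (by simp)
  have hXd : ∀ t, HasDerivAt X
      (↑(-(β t) * sin (φ t) * sin (φ t) + x t * (cos (φ t) * deriv φ t)) +
       Complex.I * ↑(-(β t) * sin (φ t) * cos (φ t) + x t * (-sin (φ t) * deriv φ t))) t := by
    intro t
    have h1 : HasDerivAt x (-(β t) * sin (φ t)) t := hdx t ▸ (hxd t).hasDerivAt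
    have h2 : HasDerivAt φ (deriv φ t) t := (hφd t).hasDerivAt
    have hsin : HasDerivAt (fun t => sin (φ t)) (cos (φ t) * deriv φ t) t :=
      (Real.hasDerivAt_sin (φ t)).comp t h2
    have hcos : HasDerivAt (fun t => cos (φ t)) (-sin (φ t) * deriv φ t) t :=
      (Real.hasDerivAt_cos (φ t)).comp t h2
    have hX' : X = fun t => ((x t * sin (φ t) : ℝ) : ℂ) +
        Complex.I * ((x t * cos (φ t) : ℝ) : ℂ) := funext hX
    rw [hX']
    exact ((h1.mul hsin).ofReal_comp).add (((h1.mul hcos).ofReal_comp).const_mul Complex.I)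
  have ode : ∀ t : ℝ, deriv X t - 2 * Complex.I * (α t : ℂ) * (β t : ℂ) * X t = -(β t : ℂ) := by
    intro t
    rw [(hXd t).deriv, hX t]
    have key : x t * deriv φ t = -(2 * α t * β t * x t) - β t * cos (φ t) := by
      nlinarith [hHJ t]
    have pyth := sin_sq_add_cos_sq (φ t)
    rw [Complex.ext_iff]
    refine ⟨?_, ?_⟩ <;>
      simp only [Complex.add_re, Complex.add_im, Complex.mul_re, Complex.mul_im, Complex.I_re,
        Complex.I_im, Complex.ofReal_re, Complex.ofReal_im, Complex.neg_re, Complex.neg_im,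
        Complex.sub_re, Complex.sub_im, Complex.re_ofNat, Complex.im_ofNat]
    · linear_combination cos (φ t) * key - β t * pyth
    · linear_combination (- sin (φ t)) * key
  refine ⟨ode, ?_⟩
  intro η F G hη hF hG hdη hdF hdG h0
  have hηd : Differentiable ℝ η := hη.differentiable (by simp)
  have hFd : Differentiable ℝ F := hF.differentiable (by simp)
  have hGd : Differentiable ℝ G := hG.differentiable (by simp)
  set E : ℝ → ℂ := fun t => Complex.exp (-(Complex.I * (η t : ℂ))) with hE
  have hEval : ∀ t, E t = ↑(cos (η t)) - Complex.I * ↑(sin (η t)) := by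
    intro t
    simp only [hE]
    rw [show -(Complex.I * (η t : ℂ)) = ((-η t : ℝ) : ℂ) * Complex.I by push_cast; ring,
      Complex.exp_mul_I]
    push_cast
    simp [Real.cos_neg, Real.sin_neg]
    ring
  have hgd : ∀ t, HasDerivAt (fun t => X t * E t - ((F t : ℂ) - Complex.I * (G t : ℂ))) 0 t := by
    intro t
    have hηc : HasDerivAt (fun t => -(Complex.I * ((η t : ℝ) : ℂ)))
        (-(Complex.I * ((2 * α t * β t : ℝ) : ℂ))) t :=
      (((hdη t ▸ (hηd t).hasDerivAt).ofReal_comp).const_mul Complex.I).neg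
    have hEd : HasDerivAt E (E t * (-(Complex.I * ((2 * α t * β t : ℝ) : ℂ)))) t := by
      simpa [hE, mul_comm] using hηc.cexp
    have hFc : HasDerivAt (fun t => ((F t : ℝ) : ℂ)) ((-(β t) * cos (η t) : ℝ) : ℂ) t :=
      (hdF t ▸ (hFd t).hasDerivAt).ofReal_comp
    have hGc : HasDerivAt (fun t => Complex.I * ((G t : ℝ) : ℂ))
        (Complex.I * ((-(β t) * sin (η t) : ℝ) : ℂ)) t :=
      ((hdG t ▸ (hGd t).hasDerivAt).ofReal_comp).const_mul Complex.I
    have total := (((hXd t).mul hEd).sub (hFc.sub hGc))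
    convert total using 1
    · rfl
    · rfl
    have hXode := ode t
    rw [(hXd t).deriv] at hXode
    have hXval : (↑(-(β t) * sin (φ t) * sin (φ t) + x t * (cos (φ t) * deriv φ t)) +
       Complex.I * ↑(-(β t) * sin (φ t) * cos (φ t) + x t * (-sin (φ t) * deriv φ t)) : ℂ)
        = 2 * Complex.I * (α t : ℂ) * (β t : ℂ) * X t - (β t : ℂ) := by
      linear_combination hXode
    rw [hXval, hEval t]
    push_cast
    ring_nf
  have hgc : ∀ t : ℝ, X t * E t - ((F t : ℂ) - Complex.I * (G t : ℂ))
      = X t₀ * E t₀ - ((F t₀ : ℂ) - Complex.I * (G t₀ : ℂ)) :=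
    fun t => is_const_of_deriv_eq_zero (fun s => (hgd s).differentiableAt)
      (fun s => (hgd s).deriv) t t₀
  have hEmul : ∀ t, E t * (↑(cos (η t)) + Complex.I * ↑(sin (η t))) = 1 := by
    intro t
    rw [hEval t]
    have pyth := sin_sq_add_cos_sq (η t)
    rw [Complex.ext_iff]
    constructor <;>
      simp [Complex.add_re, Complex.add_im, Complex.mul_re, Complex.mul_im,
        Complex.sin_ofReal_re, Complex.cos_ofReal_re, Complex.sin_ofReal_im,
        Complex.cos_ofReal_im] <;> nlinarith [pyth]
  have hg0 : X t₀ * E t₀ - ((F t₀ : ℂ) - Complex.I * (G t₀ : ℂ)) = 0 := by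
    rw [h0, mul_assoc, mul_comm _ (E t₀), hEmul t₀, mul_one, sub_self]
  have hXE : ∀ t, X t * E t = (F t : ℂ) - Complex.I * (G t : ℂ) := by
    intro t
    have := (hgc t).trans hg0
    linear_combination this
  have main : ∀ t : ℝ, X t = ((F t : ℂ) - Complex.I * (G t : ℂ)) *
      (((cos (η t) : ℝ) : ℂ) + Complex.I * ((sin (η t) : ℝ) : ℂ)) := by
    intro t
    calc X t = X t * (E t * (↑(cos (η t)) + Complex.I * ↑(sin (η t)))) := by
          rw [hEmul t, mul_one]
      _ = (X t * E t) * (↑(cos (η t)) + Complex.I * ↑(sin (η t))) := by ring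
      _ = _ := by rw [hXE t]
  refine ⟨main, ?_, ?_, ?_⟩ <;> intro t <;>
    have h := (hX t).symm.trans (main t) <;>
    rw [Complex.ext_iff] at h <;>
    simp only [Complex.add_re, Complex.add_im, Complex.sub_re, Complex.sub_im, Complex.mul_re,
      Complex.mul_im, Complex.I_re, Complex.I_im, Complex.ofReal_re, Complex.ofReal_im] at h <;>
    obtain ⟨h1, h2⟩ := h
  · linarith
  · linarith
  · have e1 : x t * sin (φ t) = F t * cos (η t) + G t * sin (η t) := by linarith
    have e2 : x t * cos (φ t) = F t * sin (η t) - G t * cos (η t) := by linarith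
    have p1 := sin_sq_add_cos_sq (φ t)
    have p2 := sin_sq_add_cos_sq (η t)
    linear_combination (x t * sin (φ t) + F t * cos (η t) + G t * sin (η t)) * e1 +
      (x t * cos (φ t) + F t * sin (η t) - G t * cos (η t)) * e2 - x t ^ 2 * p1 +
      (F t ^ 2 + G t ^ 2) * p2
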